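/- Let L ≥ 1, let q_1,…,q_M ∈ Δ^L, let U := conv{q_1,…,q_M}, and let ρ(Z) = max_{q ∈ U} Σ_{j=1}^L q(j) Z(j). Let A_1,…,A_L ∈ ℝ^{n×n}, B_1,…,B_L ∈ ℝ^{n×m}, let Q, R, P be symmetric positive definite, and suppose there exists F ∈ ℝ^{m×n} such that for every l ∈ {1,…,M} the matrix Σ_{j=1}^L q_l(j)(A_j + B_j F)ᵀ P (A_j + B_j F) − P + FᵀRF + Q is negative semidefinite. Define V_0(x) := xᵀPx, V_{h+1}(x) := inf_{u} [xᵀQx + uᵀRu + ρ(j ↦ V_h(A_j x + B_j u))]; fix N ≥ 1 and suppose π : ℝ^n → ℝ^m attains the infimum in the definition of V_N, i.e., V_N(x) = xᵀQx + π(x)ᵀRπ(x) + ρ(j ↦ V_{N−1}(A_j x + B_j π(x))) for all x. Define the closed-loop dynamics f(x,j) := A_j x + B_j π(x) and the nested risk W_0(x) := ‖x‖², W_{k+1}(x) := ρ(j ↦ W_k(f(x,j))). Then the closed-loop system is uniformly globally risk-sensitive exponentially stable: there exist c ≥ 0 and λ ∈ [0,1) such that W_k(x₀) ≤ c λ^k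 ‖x₀‖² for all x₀ ∈ ℝ^n and all k ∈ ℕ. -/

import Mathlib

open Matrix

section AuxQuad

/-- Upper bound for a quadratic form in terms of `∑ |entries|` times the squared norm. -/
lemma aux_quad_upper (n : ℕ) (P : Matrix (Fin n) (Fin n) ℝ) (x : Fin n → ℝ) :
    x ⬝ᵥ (P *ᵥ x) ≤ (∑ i, ∑ j, |P i j|) * (∑ i, x i ^ 2) := by
  have hS : ∀ i, x i ^ 2 ≤ ∑ k, x k ^ 2 := fun i =>
    Finset.single_le_sum (fun k _ => sq_nonneg (x k)) (Finset.mem_univ i)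
  have key : ∀ i j, x i * (P i j * x j) ≤ |P i j| * (∑ k, x k ^ 2) := by
    intro i j
    have h1 : x i * (P i j * x j) ≤ |x i * (P i j * x j)| := le_abs_self _
    have h2 : |x i * (P i j * x j)| = |P i j| * (|x i| * |x j|) := by
      rw [abs_mul, abs_mul]; ring
    have h3 : |x i| * |x j| ≤ ∑ k, x k ^ 2 := by
      nlinarith [sq_nonneg (|x i| - |x j|), hS i, hS j, sq_abs (x i), sq_abs (x j)]
    calc x i * (P i j * x j) ≤ |P i j| * (|x i| * |x j|) := by rw [← h2]; exact h1
    _ ≤ |P i j| * (∑ k, x k ^ 2) :=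
        mul_le_mul_of_nonneg_left h3 (abs_nonneg _)
  calc x ⬝ᵥ (P *ᵥ x) = ∑ i, ∑ j, x i * (P i j * x j) := by
        simp [dotProduct, mulVec, Finset.mul_sum]
  _ ≤ ∑ i, ∑ j, |P i j| * (∑ k, x k ^ 2) := by
      apply Finset.sum_le_sum; intro i _
      apply Finset.sum_le_sum; intro j _; exact key i j
  _ = (∑ i, ∑ j, |P i j|) * (∑ i, x i ^ 2) := by
      rw [Finset.sum_mul]; congr 1; ext i; rw [Finset.sum_mul]

/-- A positive definite quadratic form dominates a positive multiple of the squared norm. -/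
lemma aux_quad_lower (n : ℕ) (Q : Matrix (Fin n) (Fin n) ℝ) (hQ : Q.PosDef) :
    ∃ a : ℝ, 0 < a ∧ ∀ x : Fin n → ℝ, a * (∑ i, x i ^ 2) ≤ x ⬝ᵥ (Q *ᵥ x) := by
  rcases Nat.eq_zero_or_pos n with hn | hn
  · refine ⟨1, one_pos, fun x => ?_⟩
    subst hn
    simp [dotProduct]
  · set E := EuclideanSpace ℝ (Fin n)
    have hc : ∀ i, Continuous fun x : E => (x : Fin n → ℝ) i := fun i =>
      (continuous_apply i).comp (EuclideanSpace.equiv (Fin n) ℝ).continuous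
    have hg : Continuous fun x : E => (x : Fin n → ℝ) ⬝ᵥ (Q *ᵥ (x : Fin n → ℝ)) := by
      simp only [dotProduct, mulVec, dotProduct]
      exact continuous_finset_sum _ fun i _ =>
        (hc i).mul (continuous_finset_sum _ fun j _ => (continuous_const.mul (hc j)))
    have hsph : IsCompact (Metric.sphere (0 : E) 1) := isCompact_sphere _ _
    have hne : (Metric.sphere (0 : E) 1).Nonempty := by
      refine ⟨EuclideanSpace.single ⟨0, hn⟩ (1 : ℝ), ?_⟩
      rw [mem_sphere_zero_iff_norm, EuclideanSpace.norm_single]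
      simp
    obtain ⟨x₀, hx₀, hmin⟩ := hsph.exists_isMinOn hne hg.continuousOn
    set a := (x₀ : Fin n → ℝ) ⬝ᵥ (Q *ᵥ (x₀ : Fin n → ℝ)) with ha
    have hn₀ : ‖x₀‖ = 1 := mem_sphere_zero_iff_norm.mp hx₀
    have hx₀ne : (x₀ : Fin n → ℝ) ≠ 0 := by
      intro h
      have hz : x₀ = 0 := by ext i; exact congrFun h i
      rw [hz] at hn₀; simp at hn₀
    have hapos : 0 < a := by simpa using hQ.dotProduct_mulVec_pos hx₀ne
    refine ⟨a, hapos, fun x => ?_⟩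
    by_cases hx : x = 0
    · simp [hx, dotProduct]
    · set y : E := WithLp.toLp 2 x with hy
      have hyne : y ≠ 0 := by
        intro h; apply hx; ext i
        exact congrFun (congrArg (fun z : E => (z : Fin n → ℝ)) h) i
      have hny : 0 < ‖y‖ := norm_pos_iff.mpr hyne
      set t := ‖y‖ with ht
      have hsph' : (t⁻¹ • y) ∈ Metric.sphere (0 : E) 1 := by
        rw [mem_sphere_zero_iff_norm, norm_smul, Real.norm_eq_abs,
          abs_of_pos (inv_pos.mpr hny)]
        exact inv_mul_cancel₀ hny.ne'
      have hmin' := hmin hsph'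
      have hscale : ((t⁻¹ • y : E) : Fin n → ℝ) ⬝ᵥ (Q *ᵥ ((t⁻¹ • y : E) : Fin n → ℝ))
          = t⁻¹ * (t⁻¹ * (x ⬝ᵥ (Q *ᵥ x))) := by
        have hcoord : ((t⁻¹ • y : E) : Fin n → ℝ) = t⁻¹ • x := rfl
        rw [hcoord, smul_dotProduct, mulVec_smul, dotProduct_smul, smul_eq_mul, smul_eq_mul]
      have hmin'' : a ≤ t⁻¹ * (t⁻¹ * (x ⬝ᵥ (Q *ᵥ x))) := by
        rw [← hscale]; exact hmin'
      have hnorm : ∑ i, x i ^ 2 = t ^ 2 := by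
        have h1 : t = Real.sqrt (∑ i, ‖(y : Fin n → ℝ) i‖ ^ 2) := EuclideanSpace.norm_eq y
        have h2 : t ^ 2 = ∑ i, x i ^ 2 := by
          rw [h1, Real.sq_sqrt (by positivity)]
          simp [sq_abs]
          rfl
        exact h2.symm
      have h3 : t * t⁻¹ = 1 := mul_inv_cancel₀ hny.ne'
      show a * (∑ i, x i ^ 2) ≤ x ⬝ᵥ (Q *ᵥ x)
      rw [hnorm]
      have h5 := mul_le_mul_of_nonneg_left hmin'' (by positivity : (0:ℝ) ≤ t ^ 2)
      have h4 : t ^ 2 * (t⁻¹ * (t⁻¹ * (x ⬝ᵥ (Q *ᵥ x)))) = x ⬝ᵥ (Q *ᵥ x) := by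
        field_simp
      rw [h4] at h5
      linarith

lemma aux_conj_quad {n p : ℕ} (G : Matrix (Fin p) (Fin n) ℝ) (P : Matrix (Fin p) (Fin p) ℝ)
    (x : Fin n → ℝ) :
    x ⬝ᵥ ((Gᵀ * P * G) *ᵥ x) = (G *ᵥ x) ⬝ᵥ (P *ᵥ (G *ᵥ x)) := by
  rw [← Matrix.mulVec_mulVec, ← Matrix.mulVec_mulVec, Matrix.dotProduct_mulVec,
    Matrix.vecMul_transpose]

/-- The quadratic-form-evaluation linear map `S ↦ xᵀ S x`. -/
def auxQuadAt {n : ℕ} (x : Fin n → ℝ) : Matrix (Fin n) (Fin n) ℝ →ₗ[ℝ] ℝ where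
  toFun S := x ⬝ᵥ (S *ᵥ x)
  map_add' S T := by rw [Matrix.add_mulVec, dotProduct_add]
  map_smul' c S := by
    simp only [RingHom.id_apply, smul_eq_mul]
    rw [Matrix.smul_mulVec, dotProduct_smul, smul_eq_mul]

lemma auxQuadAt_apply {n : ℕ} (x : Fin n → ℝ) (S : Matrix (Fin n) (Fin n) ℝ) :
    auxQuadAt x S = x ⬝ᵥ (S *ᵥ x) := rfl

lemma aux_sum_smul_quad {n L : ℕ} (c : Fin L → ℝ) (N : Fin L → Matrix (Fin n) (Fin n) ℝ)
    (x : Fin n → ℝ) :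
    x ⬝ᵥ ((∑ j, c j • N j) *ᵥ x) = ∑ j, c j * (x ⬝ᵥ (N j *ᵥ x)) := by
  have h := map_sum (auxQuadAt x) (fun j => c j • N j) Finset.univ
  rw [auxQuadAt_apply] at h
  rw [h]
  congr 1; ext j
  rw [LinearMap.map_smul, auxQuadAt_apply, smul_eq_mul]

end AuxQuad

section RhoFacts
variable {L M : ℕ} {q : Fin M → Fin L → ℝ} {ρ : (Fin L → ℝ) → ℝ}

lemma aux_hull_sub (hq : ∀ l, q l ∈ stdSimplex ℝ (Fin L)) :
    convexHull ℝ (Set.range q) ⊆ stdSimplex ℝ (Fin L) :=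
  convexHull_min (by rintro _ ⟨l, rfl⟩; exact hq l) (convex_stdSimplex ℝ _)

lemma aux_rho_mono (hq : ∀ l, q l ∈ stdSimplex ℝ (Fin L))
    (hρ : ∀ Z : Fin L → ℝ,
      IsGreatest ((fun qq => ∑ j, qq j * Z j) '' (convexHull ℝ (Set.range q))) (ρ Z))
    {Z Z' : Fin L → ℝ} (h : ∀ j, Z j ≤ Z' j) : ρ Z ≤ ρ Z' := by
  obtain ⟨qq, hqq, heq⟩ := (hρ Z).1
  have hnn : ∀ j, 0 ≤ qq j := fun j => (aux_hull_sub hq hqq).1 j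
  calc ρ Z = ∑ j, qq j * Z j := heq.symm
  _ ≤ ∑ j, qq j * Z' j :=
      Finset.sum_le_sum fun j _ => mul_le_mul_of_nonneg_left (h j) (hnn j)
  _ ≤ ρ Z' := (hρ Z').2 ⟨qq, hqq, rfl⟩

lemma aux_rho_smul
    (hρ : ∀ Z : Fin L → ℝ,
      IsGreatest ((fun qq => ∑ j, qq j * Z j) '' (convexHull ℝ (Set.range q))) (ρ Z))
    {c : ℝ} (hc : 0 ≤ c) (Z : Fin L → ℝ) : ρ (fun j => c * Z j) = c * ρ Z := by
  obtain ⟨qq, hqq, heq⟩ := (hρ (fun j => c * Z j)).1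
  obtain ⟨pp, hpp, heq'⟩ := (hρ Z).1
  apply le_antisymm
  · calc ρ (fun j => c * Z j) = ∑ j, qq j * (c * Z j) := heq.symm
    _ = c * ∑ j, qq j * Z j := by rw [Finset.mul_sum]; congr 1; ext j; ring
    _ ≤ c * ρ Z := mul_le_mul_of_nonneg_left ((hρ Z).2 ⟨qq, hqq, rfl⟩) hc
  · calc c * ρ Z = c * ∑ j, pp j * Z j := congrArg (fun z => c * z) heq'.symm
    _ = ∑ j, pp j * (c * Z j) := by rw [Finset.mul_sum]; congr 1; ext j; ring
    _ ≤ ρ (fun j => c * Z j) := (hρ (fun j => c * Z j)).2 ⟨pp, hpp, rfl⟩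

lemma aux_rho_nonneg (hM : 1 ≤ M)
    (hρ : ∀ Z : Fin L → ℝ,
      IsGreatest ((fun qq => ∑ j, qq j * Z j) '' (convexHull ℝ (Set.range q))) (ρ Z))
    (hq : ∀ l, q l ∈ stdSimplex ℝ (Fin L))
    {Z : Fin L → ℝ} (h : ∀ j, 0 ≤ Z j) : 0 ≤ ρ Z := by
  have hmem : q ⟨0, hM⟩ ∈ convexHull ℝ (Set.range q) :=
    subset_convexHull ℝ _ ⟨⟨0, hM⟩, rfl⟩
  calc (0:ℝ) ≤ ∑ j, q ⟨0, hM⟩ j * Z j :=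
      Finset.sum_nonneg fun j _ => mul_nonneg ((hq _).1 j) (h j)
  _ ≤ ρ Z := (hρ Z).2 ⟨_, hmem, rfl⟩

lemma aux_rho_le_of_vertex
    (hρ : ∀ Z : Fin L → ℝ,
      IsGreatest ((fun qq => ∑ j, qq j * Z j) '' (convexHull ℝ (Set.range q))) (ρ Z))
    {Z : Fin L → ℝ} {c : ℝ} (h : ∀ l, ∑ j, q l j * Z j ≤ c) : ρ Z ≤ c := by
  obtain ⟨qq, hqq, heq⟩ := (hρ Z).1
  have hconv : Convex ℝ {p : Fin L → ℝ | ∑ j, p j * Z j ≤ c} := by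
    have hlin : IsLinearMap ℝ (fun p : Fin L → ℝ => ∑ j, p j * Z j) := by
      constructor
      · intro p p'; simp [add_mul, Finset.sum_add_distrib]
      · intro s p; simp [Finset.mul_sum, smul_eq_mul, mul_assoc]
    exact convex_halfSpace_le hlin c
  have hsub : convexHull ℝ (Set.range q) ⊆ {p : Fin L → ℝ | ∑ j, p j * Z j ≤ c} :=
    convexHull_min (by rintro _ ⟨l, rfl⟩; exact h l) hconv
  rw [← heq]; exact hsub hqq

end RhoFacts

/-- Stochastic stability of the risk-averse MPC law (Theorem 3 of the paper):
under the vertex LMI terminal-cost condition, the closed loop under the `N`-step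
risk-averse MPC control law `π` is uniformly globally risk-sensitive exponentially
stable. Here `‖x‖² = ∑ i, x i ^ 2` is the squared Euclidean norm. -/
theorem stmt_14 (L n m M : ℕ) (hL : 1 ≤ L) (hM : 1 ≤ M)
    (q : Fin M → Fin L → ℝ) (hq : ∀ l, q l ∈ stdSimplex ℝ (Fin L))
    (ρ : (Fin L → ℝ) → ℝ)
    (hρ : ∀ Z : Fin L → ℝ,
      IsGreatest ((fun qq => ∑ j, qq j * Z j) '' (convexHull ℝ (Set.range q))) (ρ Z))
    (A : Fin L → Matrix (Fin n) (Fin n) ℝ) (B : Fin L → Matrix (Fin n) (Fin m) ℝ)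
    (Q P : Matrix (Fin n) (Fin n) ℝ) (R : Matrix (Fin m) (Fin m) ℝ)
    (hQ : Q.PosDef) (hP : P.PosDef) (hR : R.PosDef)
    (F : Matrix (Fin m) (Fin n) ℝ)
    (hlmi : ∀ l : Fin M,
      (-((∑ j, q l j • ((A j + B j * F)ᵀ * P * (A j + B j * F))) - P
          + Fᵀ * R * F + Q)).PosSemidef)
    (V : ℕ → (Fin n → ℝ) → ℝ)
    (hV0 : ∀ x, V 0 x = x ⬝ᵥ (P *ᵥ x))
    (hVs : ∀ (h : ℕ) (x : Fin n → ℝ), V (h + 1) x =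
      ⨅ u : Fin m → ℝ, (x ⬝ᵥ (Q *ᵥ x) + u ⬝ᵥ (R *ᵥ u)
        + ρ (fun j => V h (A j *ᵥ x + B j *ᵥ u))))
    (N : ℕ) (hN : 1 ≤ N)
    (π : (Fin n → ℝ) → (Fin m → ℝ))
    (hπ : ∀ x, V N x = x ⬝ᵥ (Q *ᵥ x) + (π x) ⬝ᵥ (R *ᵥ (π x))
      + ρ (fun j => V (N - 1) (A j *ᵥ x + B j *ᵥ (π x))))
    (f : (Fin n → ℝ) → Fin L → (Fin n → ℝ))
    (hf : ∀ x j, f x j = A j *ᵥ x + B j *ᵥ (π x))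
    (W : ℕ → (Fin n → ℝ) → ℝ)
    (hW0 : ∀ x, W 0 x = ∑ i, x i ^ 2)
    (hWs : ∀ k x, W (k + 1) x = ρ (fun j => W k (f x j))) :
    ∃ c lam : ℝ, 0 ≤ c ∧ 0 ≤ lam ∧ lam < 1 ∧
      ∀ (x₀ : Fin n → ℝ) (k : ℕ), W k x₀ ≤ c * lam ^ k * (∑ i, x₀ i ^ 2) := by
  -- nonnegativity of the elementary quadratic forms
  have hQnn : ∀ x : Fin n → ℝ, 0 ≤ x ⬝ᵥ (Q *ᵥ x) := fun x => by
    have := hQ.posSemidef.dotProduct_mulVec_nonneg x; simpa using this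
  have hPnn : ∀ x : Fin n → ℝ, 0 ≤ x ⬝ᵥ (P *ᵥ x) := fun x => by
    have := hP.posSemidef.dotProduct_mulVec_nonneg x; simpa using this
  have hRnn : ∀ u : Fin m → ℝ, 0 ≤ u ⬝ᵥ (R *ᵥ u) := fun u => by
    have := hR.posSemidef.dotProduct_mulVec_nonneg u; simpa using this
  -- nonnegativity of the value functions
  have hVnn : ∀ (h : ℕ) (x : Fin n → ℝ), 0 ≤ V h x := by
    intro h
    induction h with
    | zero => intro x; rw [hV0]; exact hPnn x
    | succ h ih =>
      intro x
      rw [hVs]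
      refine Real.iInf_nonneg fun u => ?_
      exact add_nonneg (add_nonneg (hQnn x) (hRnn u))
        (aux_rho_nonneg hM hρ hq fun j => ih _)
  -- the infima are over families bounded below by 0
  have hbdd : ∀ (h : ℕ) (x : Fin n → ℝ),
      BddBelow (Set.range fun u : Fin m → ℝ => x ⬝ᵥ (Q *ᵥ x) + u ⬝ᵥ (R *ᵥ u)
        + ρ (fun j => V h (A j *ᵥ x + B j *ᵥ u))) := by
    intro h x
    refine ⟨0, ?_⟩
    rintro y ⟨u, rfl⟩
    exact add_nonneg (add_nonneg (hQnn x) (hRnn u))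
      (aux_rho_nonneg hM hρ hq fun j => hVnn h _)
  -- one-step monotonicity : V (h+1) ≤ V h
  have hstep : ∀ (h : ℕ) (x : Fin n → ℝ), V (h + 1) x ≤ V h x := by
    intro h
    induction h with
    | zero =>
      intro x
      rw [hVs 0 x, hV0]
      refine le_trans (ciInf_le (hbdd 0 x) (F *ᵥ x)) ?_
      set u : Fin m → ℝ := F *ᵥ x with hu
      have hfun : (fun j => V 0 (A j *ᵥ x + B j *ᵥ u))
          = fun j => (A j *ᵥ x + B j *ᵥ u) ⬝ᵥ (P *ᵥ (A j *ᵥ x + B j *ᵥ u)) :=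
        funext fun j => hV0 _
      rw [hfun]
      have hvertex : ∀ l : Fin M,
          ∑ j, q l j * ((A j *ᵥ x + B j *ᵥ u) ⬝ᵥ (P *ᵥ (A j *ᵥ x + B j *ᵥ u)))
          ≤ x ⬝ᵥ (P *ᵥ x) - x ⬝ᵥ (Q *ᵥ x) - u ⬝ᵥ (R *ᵥ u) := by
        intro l
        have h0 : 0 ≤ x ⬝ᵥ ((-((∑ j, q l j • ((A j + B j * F)ᵀ * P * (A j + B j * F))) - P
            + Fᵀ * R * F + Q)) *ᵥ x) := by
          have := (hlmi l).dotProduct_mulVec_nonneg x; simpa using this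
        have hexp : x ⬝ᵥ ((-((∑ j, q l j • ((A j + B j * F)ᵀ * P * (A j + B j * F))) - P
            + Fᵀ * R * F + Q)) *ᵥ x)
            = -(x ⬝ᵥ ((∑ j, q l j • ((A j + B j * F)ᵀ * P * (A j + B j * F))) *ᵥ x))
              + x ⬝ᵥ (P *ᵥ x) - x ⬝ᵥ ((Fᵀ * R * F) *ᵥ x) - x ⬝ᵥ (Q *ᵥ x) := by
          rw [Matrix.neg_mulVec, dotProduct_neg]
          rw [Matrix.add_mulVec, Matrix.add_mulVec, Matrix.sub_mulVec]
          rw [dotProduct_add, dotProduct_add, dotProduct_sub]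
          ring
        have hsum : x ⬝ᵥ ((∑ j, q l j • ((A j + B j * F)ᵀ * P * (A j + B j * F))) *ᵥ x)
            = ∑ j, q l j * ((A j *ᵥ x + B j *ᵥ u) ⬝ᵥ (P *ᵥ (A j *ᵥ x + B j *ᵥ u))) := by
          rw [aux_sum_smul_quad]
          congr 1; ext j
          rw [aux_conj_quad]
          congr 2 <;>
          · rw [Matrix.add_mulVec, ← Matrix.mulVec_mulVec]
        have hRF : x ⬝ᵥ ((Fᵀ * R * F) *ᵥ x) = u ⬝ᵥ (R *ᵥ u) := by
          rw [aux_conj_quad]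
        rw [hexp, hsum, hRF] at h0
        linarith
      have hρle := aux_rho_le_of_vertex hρ hvertex
      linarith
    | succ h ih =>
      intro x
      rw [hVs (h + 1) x, hVs h x]
      refine ciInf_mono (hbdd (h + 1) x) fun u => ?_
      exact add_le_add_right (aux_rho_mono hq hρ fun j => ih _) _
  -- V h ≤ V 0 = xᵀPx
  have hVle0 : ∀ (h : ℕ) (x : Fin n → ℝ), V h x ≤ x ⬝ᵥ (P *ᵥ x) := by
    intro h
    induction h with
    | zero => intro x; rw [hV0]
    | succ h ih => intro x; exact le_trans (hstep h x) (ih x)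
  -- V N ≥ xᵀQx
  have hVQ : ∀ x : Fin n → ℝ, x ⬝ᵥ (Q *ᵥ x) ≤ V N x := by
    intro x
    rw [hπ x]
    have h1 : 0 ≤ (π x) ⬝ᵥ (R *ᵥ (π x)) := hRnn _
    have h2 : 0 ≤ ρ (fun j => V (N - 1) (A j *ᵥ x + B j *ᵥ (π x))) :=
      aux_rho_nonneg hM hρ hq fun j => hVnn _ _
    linarith
  -- the eigenvalue-type constants
  obtain ⟨a, hapos, haQ⟩ := aux_quad_lower n Q hQ
  set Cp := ∑ i, ∑ j, |P i j| with hCp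
  set b := max Cp a with hb
  have hab : a ≤ b := le_max_right _ _
  have hbpos : 0 < b := lt_of_lt_of_le hapos hab
  have hPb : ∀ x : Fin n → ℝ, x ⬝ᵥ (P *ᵥ x) ≤ b * (∑ i, x i ^ 2) := by
    intro x
    refine le_trans (aux_quad_upper n P x) ?_
    exact mul_le_mul_of_nonneg_right (le_max_left _ _)
      (Finset.sum_nonneg fun i _ => sq_nonneg _)
  set r := 1 - a / b with hr
  have hrnn : 0 ≤ r := by
    have : a / b ≤ 1 := (div_le_one hbpos).mpr hab
    simp only [hr]; linarith
  have hrlt : r < 1 := by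
    have : 0 < a / b := div_pos hapos hbpos
    simp only [hr]; linarith
  -- dissipation inequality
  have hdiss : ∀ x : Fin n → ℝ, ρ (fun j => V N (f x j)) ≤ r * V N x := by
    intro x
    have hN' : N - 1 + 1 = N := Nat.succ_pred_eq_of_pos hN
    have hmono : ∀ j, V N (f x j) ≤ V (N - 1) (f x j) := by
      intro j
      have := hstep (N - 1) (f x j)
      rwa [hN'] at this
    have h1 : ρ (fun j => V N (f x j)) ≤ ρ (fun j => V (N - 1) (f x j)) :=
      aux_rho_mono hq hρ hmono
    have h2 : ρ (fun j => V (N - 1) (f x j)) = V N x - x ⬝ᵥ (Q *ᵥ x)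
        - (π x) ⬝ᵥ (R *ᵥ (π x)) := by
      have hfun : (fun j => V (N - 1) (f x j))
          = fun j => V (N - 1) (A j *ᵥ x + B j *ᵥ (π x)) :=
        funext fun j => by rw [hf]
      rw [hfun]
      have := hπ x
      linarith
    have h3 : (a / b) * V N x ≤ x ⬝ᵥ (Q *ᵥ x) := by
      have hVP : V N x ≤ b * (∑ i, x i ^ 2) := le_trans (hVle0 N x) (hPb x)
      have habnn : 0 ≤ a / b := le_of_lt (div_pos hapos hbpos)
      have h4 : (a / b) * V N x ≤ (a / b) * (b * (∑ i, x i ^ 2)) :=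
        mul_le_mul_of_nonneg_left hVP habnn
      have h5 : (a / b) * (b * (∑ i, x i ^ 2)) = a * (∑ i, x i ^ 2) := by
        field_simp
      rw [h5] at h4
      exact le_trans h4 (haQ x)
    have hRπ : 0 ≤ (π x) ⬝ᵥ (R *ᵥ (π x)) := hRnn _
    calc ρ (fun j => V N (f x j)) ≤ V N x - x ⬝ᵥ (Q *ᵥ x) - (π x) ⬝ᵥ (R *ᵥ (π x)) := by
          rw [← h2]; exact h1
    _ ≤ V N x - (a / b) * V N x := by linarith
    _ = r * V N x := by rw [hr]; ring
  -- main induction : W k x ≤ a⁻¹ * r ^ k * V N x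
  have hclaim : ∀ (k : ℕ) (x : Fin n → ℝ), W k x ≤ a⁻¹ * r ^ k * V N x := by
    intro k
    induction k with
    | zero =>
      intro x
      rw [hW0, pow_zero]
      have h1 : a * (∑ i, x i ^ 2) ≤ V N x := le_trans (haQ x) (hVQ x)
      have h2 := mul_le_mul_of_nonneg_left h1 (le_of_lt (inv_pos.mpr hapos))
      rw [← mul_assoc, inv_mul_cancel₀ hapos.ne', one_mul] at h2
      linarith
    | succ k ih =>
      intro x
      rw [hWs]
      have hcnn : (0:ℝ) ≤ a⁻¹ * r ^ k := by positivity
      calc ρ (fun j => W k (f x j))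
          ≤ ρ (fun j => (a⁻¹ * r ^ k) * V N (f x j)) :=
            aux_rho_mono hq hρ fun j => ih (f x j)
      _ = (a⁻¹ * r ^ k) * ρ (fun j => V N (f x j)) := aux_rho_smul hρ hcnn _
      _ ≤ (a⁻¹ * r ^ k) * (r * V N x) :=
            mul_le_mul_of_nonneg_left (hdiss x) hcnn
      _ = a⁻¹ * r ^ (k + 1) * V N x := by ring
  -- conclusion
  refine ⟨a⁻¹ * b, r, by positivity, hrnn, hrlt, fun x₀ k => ?_⟩
  have h1 := hclaim k x₀
  have h2 : V N x₀ ≤ b * (∑ i, x₀ i ^ 2) := le_trans (hVle0 N x₀) (hPb x₀)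
  have h3 : a⁻¹ * r ^ k * V N x₀ ≤ a⁻¹ * r ^ k * (b * (∑ i, x₀ i ^ 2)) :=
    mul_le_mul_of_nonneg_left h2 (by positivity)
  calc W k x₀ ≤ a⁻¹ * r ^ k * V N x₀ := h1
  _ ≤ a⁻¹ * r ^ k * (b * (∑ i, x₀ i ^ 2)) := h3
  _ = a⁻¹ * b * r ^ k * (∑ i, x₀ i ^ 2) := by ring
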